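/- Let T be a finite rooted tree with node set N, let w : N → ℝ be a strictly positive weight function, let T* ≥ 0, α > 1, β ≥ 0 be real constants, and suppose every internal node X satisfies ∑_{Y ∈ C(X)} w(Y) ≥ α·w(X) − β·(|C(X)|+1)·T*. Define S : N → ℝ recursively by S(root) = 0 and, for each child Z of a node X, S(Z) = (S(X) + w(X) − (β/(α−1))·(|C(X)|+1)·T*) · w(Z) / (∑_{Y ∈ C(X)} w(Y)). Then S(X) ≤ w(X)/(α−1) holds for every node X. -/

import Mathlib

/-- A finite rooted tree on node set `N`: a distinguished root and a parent
function such that the root is its own parent and iterating the parent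
function from any node eventually reaches the root. -/
structure FinRootedTree (N : Type*) where
  root : N
  parent : N → N
  parent_root : parent root = root
  reaches_root : ∀ X : N, ∃ k : ℕ, parent^[k] X = root

/-- The children of a node `X`: the non-root nodes whose parent is `X`. -/
def FinRootedTree.children {N : Type*} [Fintype N] [DecidableEq N]
    (T : FinRootedTree N) (X : N) : Finset N :=
  Finset.univ.filter fun Y => Y ≠ T.root ∧ T.parent Y = X

/-- The Claim in the proof of Theorem 1: if `S` is defined by the Push Out
rule (`S(root) = 0`, and each child receives computation time proportional to
its own weight), then `S(X) ≤ w(X)/(α−1)` for every node `X`. -/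
theorem pushOutRule_claim {N : Type*} [Fintype N] [DecidableEq N]
    (T : FinRootedTree N) (w : N → ℝ) (Tstar α β : ℝ)
    (hw : ∀ X : N, 0 < w X) (hTstar : 0 ≤ Tstar)
    (hα : 1 < α) (hβ : 0 ≤ β)
    (hPO : ∀ X : N, T.children X ≠ ∅ →
      α * w X - β * (((T.children X).card : ℝ) + 1) * Tstar ≤
        ∑ Y ∈ T.children X, w Y)
    (S : N → ℝ)
    (hSroot : S T.root = 0)
    (hSrec : ∀ Z : N, Z ≠ T.root →
      S Z = (S (T.parent Z) + w (T.parent Z) -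
              (β / (α - 1)) * (((T.children (T.parent Z)).card : ℝ) + 1) * Tstar) *
            w Z / (∑ Y ∈ T.children (T.parent Z), w Y)) :
    ∀ X : N, S X ≤ w X / (α - 1) := by
  have hα1 : (0:ℝ) < α - 1 := by linarith
  have key : ∀ k : ℕ, ∀ X : N, T.parent^[k] X = T.root → S X ≤ w X / (α - 1) := by
    intro k
    induction k with
    | zero =>
      intro X hX
      simp only [Function.iterate_zero, id] at hX
      subst hX
      rw [hSroot]
      exact div_nonneg (hw _).le hα1.le
    | succ k ih =>
      intro X hX
      by_cases hroot : X = T.root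
      · subst hroot; rw [hSroot]; exact div_nonneg (hw _).le hα1.le
      · have hP : T.parent^[k] (T.parent X) = T.root := by
          rwa [Function.iterate_succ_apply] at hX
        have hSP := ih (T.parent X) hP
        set P := T.parent X with hPdef
        have hmem : X ∈ T.children P := by
          simp [FinRootedTree.children, hroot]
          exact hPdef.symm
        have hne : T.children P ≠ ∅ := Finset.ne_empty_of_mem hmem
        have hsum : 0 < ∑ Y ∈ T.children P, w Y :=
          Finset.sum_pos (fun Y _ => hw Y) ⟨X, hmem⟩
        have hpo := hPO P hne
        set c : ℝ := ((T.children P).card : ℝ) + 1 with hc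
        have hA : S P + w P - (β / (α - 1)) * c * Tstar
            ≤ (∑ Y ∈ T.children P, w Y) / (α - 1) := by
          rw [le_div_iff₀ hα1]
          have expand : (S P + w P - (β / (α - 1)) * c * Tstar) * (α - 1)
              = (S P) * (α - 1) + (α - 1) * w P - β * c * Tstar := by
            field_simp
          rw [expand]
          have hSP' : S P * (α - 1) ≤ w P := (le_div_iff₀ hα1).mp hSP
          nlinarith [hpo, hSP']
        rw [hSrec X hroot, ← hPdef]
        calc (S P + w P - (β / (α - 1)) * c * Tstar) * w X / (∑ Y ∈ T.children P, w Y)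
            ≤ ((∑ Y ∈ T.children P, w Y) / (α - 1)) * w X / (∑ Y ∈ T.children P, w Y) := by
              gcongr
              exact (hw X).le
          _ = w X / (α - 1) := by field_simp
  intro X
  obtain ⟨k, hk⟩ := T.reaches_root X
  exact key k X hk
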